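/- For a rational matrix A ∈ ℚ^{m×n}, A is (s,ℤⁿ,0)-good if and only if A is (s,ℝⁿ,0)-good. -/

import Mathlib

open scoped Classical

/-- If a rational matrix has a nonzero real kernel vector, it has a nonzero
rational kernel vector. -/
lemma rat_ker_of_real_ker {I J : Type*} [Fintype I] [Fintype J] [DecidableEq I] [DecidableEq J]
    (M : Matrix I J ℚ) (u : J → ℝ) (hu : u ≠ 0)
    (h : (M.map ((↑) : ℚ → ℝ)).mulVec u = 0) :
    ∃ w : J → ℚ, w ≠ 0 ∧ M.mulVec w = 0 := by
  by_contra hcon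
  push_neg at hcon
  -- the rational kernel is trivial, so M.mulVecLin is injective
  have hker : LinearMap.ker M.mulVecLin = ⊥ := by
    rw [Matrix.ker_mulVecLin_eq_bot_iff]
    intro v hv
    by_contra hv0
    exact (hcon v hv0) hv
  obtain ⟨g, hg⟩ := LinearMap.exists_leftInverse_of_injective M.mulVecLin hker
  -- B * M = 1 over ℚ
  set B : Matrix J I ℚ := LinearMap.toMatrix' g with hB
  have hBM : B * M = 1 := by
    have h1 : LinearMap.toMatrix' (g.comp M.mulVecLin) = B * LinearMap.toMatrix' M.mulVecLin :=
      LinearMap.toMatrix'_comp g M.mulVecLin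
    have h2 : LinearMap.toMatrix' M.mulVecLin = M := by
      rw [← Matrix.toLin'_apply' M]
      exact LinearMap.toMatrix'_toLin' M
    rw [hg, h2] at h1
    rw [← h1, LinearMap.toMatrix'_id]
  -- transfer to ℝ
  have hBMR : (B.map ((↑) : ℚ → ℝ)) * (M.map ((↑) : ℚ → ℝ)) = 1 := by
    have h1 : (B * M).map ((Rat.castHom ℝ) : ℚ →+* ℝ) =
        B.map (Rat.castHom ℝ) * M.map (Rat.castHom ℝ) := Matrix.map_mul
    rw [hBM] at h1
    have h2 : (1 : Matrix J J ℚ).map ((Rat.castHom ℝ) : ℚ →+* ℝ) = 1 :=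
      Matrix.map_one _ (by simp) (by simp)
    rw [h2] at h1
    exact h1.symm
  apply hu
  calc u = (1 : Matrix J J ℝ).mulVec u := by rw [Matrix.one_mulVec]
    _ = ((B.map ((↑) : ℚ → ℝ)) * (M.map ((↑) : ℚ → ℝ))).mulVec u := by rw [hBMR]
    _ = (B.map ((↑) : ℚ → ℝ)).mulVec ((M.map ((↑) : ℚ → ℝ)).mulVec u) := by
        rw [Matrix.mulVec_mulVec]
    _ = 0 := by rw [h, Matrix.mulVec_zero]

theorem stmt4 (m n s : ℕ) (A : Matrix (Fin m) (Fin n) ℚ) :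
    (∀ xhat : Fin n → ℤ, (Finset.univ.filter fun i => xhat i ≠ 0).card ≤ s →
      ∀ x : Fin n → ℤ, (Finset.univ.filter fun i => x i ≠ 0).card ≤ s →
        (A.map ((↑) : ℚ → ℝ)).mulVec (fun j => (x j : ℝ)) =
          (A.map ((↑) : ℚ → ℝ)).mulVec (fun j => (xhat j : ℝ)) → x = xhat)
    ↔ (∀ xhat : Fin n → ℝ, (Finset.univ.filter fun i => xhat i ≠ 0).card ≤ s →
      ∀ x : Fin n → ℝ, (Finset.univ.filter fun i => x i ≠ 0).card ≤ s →
        (A.map ((↑) : ℚ → ℝ)).mulVec x = (A.map ((↑) : ℚ → ℝ)).mulVec xhat → x = xhat) := by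
  constructor
  · -- hard direction: ℤ-good → ℝ-good
    intro hZ xhat hxhat x hx hAx
    by_contra hne
    -- v is a nonzero real kernel vector supported in S
    set v : Fin n → ℝ := x - xhat with hv
    have hv0 : v ≠ 0 := fun h => hne (by
      funext i
      have := congrFun h i
      simpa [hv, sub_eq_zero] using this)
    have hAv : (A.map ((↑) : ℚ → ℝ)).mulVec v = 0 := by
      rw [hv, Matrix.mulVec_sub, hAx, sub_self]
    set S : Finset (Fin n) := (Finset.univ.filter fun i => x i ≠ 0) ∪
      (Finset.univ.filter fun i => xhat i ≠ 0) with hS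
    have hvS : ∀ i, i ∉ S → v i = 0 := by
      intro i hi
      simp only [hS, Finset.mem_union, Finset.mem_filter, Finset.mem_univ, true_and,
        not_or, not_not] at hi
      simp [hv, hi.1, hi.2]
    -- restrict to S
    set M : Matrix (Fin m) {i // i ∈ S} ℚ := fun i j => A i j.1 with hM
    set u : {i // i ∈ S} → ℝ := fun j => v j.1 with hu
    have hu0 : u ≠ 0 := by
      intro h
      apply hv0
      funext i
      by_cases hiS : i ∈ S
      · exact congrFun h ⟨i, hiS⟩
      · exact hvS i hiS
    have hMu : (M.map ((↑) : ℚ → ℝ)).mulVec u = 0 := by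
      funext i
      have key : (M.map ((↑) : ℚ → ℝ)).mulVec u i = (A.map ((↑) : ℚ → ℝ)).mulVec v i := by
        simp only [Matrix.mulVec, dotProduct, Matrix.map_apply, hM, hu]
        show ∑ j : {i // i ∈ S}, ((A i j.1 : ℝ)) * v j.1 = _
        rw [Finset.sum_coe_sort S (fun j => ((A i j : ℝ)) * v j)]
        exact Finset.sum_subset (Finset.subset_univ S)
          (fun j _ hjS => by rw [hvS j hjS, mul_zero])
      rw [key, hAv]
    obtain ⟨w', hw'0, hw'⟩ := rat_ker_of_real_ker M u hu0 hMu
    -- extend w' by zero to all of Fin n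
    set wq : Fin n → ℚ := fun i => if h : i ∈ S then w' ⟨i, h⟩ else 0 with hwq
    have hwq0 : wq ≠ 0 := by
      intro h
      apply hw'0
      funext j
      have := congrFun h j.1
      simpa [hwq, j.2] using this
    have hAwq : A.mulVec wq = 0 := by
      funext i
      have : A.mulVec wq i = M.mulVec w' i := by
        simp only [Matrix.mulVec, dotProduct, hM]
        have e1 : ∑ j : {i // i ∈ S}, A i j.1 * w' j =
            ∑ j : {i // i ∈ S}, A i j.1 * wq j.1 := by
          apply Finset.sum_congr rfl
          intro j _
          simp [hwq, j.2]
        rw [e1, Finset.sum_coe_sort S (fun j => A i j * wq j)]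
        exact (Finset.sum_subset (Finset.subset_univ S)
          (fun j _ hjS => by simp [hwq, hjS])).symm
      rw [this, hw']
    -- clear denominators: get a nonzero integer multiple
    obtain ⟨b, hb⟩ := IsLocalization.exist_integer_multiples_of_finite (nonZeroDivisors ℤ) wq
    set wz : Fin n → ℤ := fun i => (hb i).choose with hwz
    have hwzspec : ∀ i, (wz i : ℚ) = ((b : ℤ) : ℚ) * wq i := by
      intro i
      have h1 : ((wz i : ℤ) : ℚ) = (b : ℤ) • wq i := (hb i).choose_spec
      simpa [zsmul_eq_mul] using h1
    have hbne : (b : ℤ) ≠ 0 := nonZeroDivisors.coe_ne_zero b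
    have hbq : ((b : ℤ) : ℚ) ≠ 0 := Int.cast_ne_zero.mpr hbne
    have hwz0 : wz ≠ 0 := by
      intro h
      apply hwq0
      funext i
      have h1 := hwzspec i
      rw [congrFun h i] at h1
      simp only [Pi.zero_apply, Int.cast_zero] at h1
      rcases mul_eq_zero.mp h1.symm with hb' | hw
      · exact absurd hb' hbq
      · exact hw
    have hwzS : ∀ i, i ∉ S → wz i = 0 := by
      intro i hi
      have h1 := hwzspec i
      have : wq i = 0 := by simp [hwq, hi]
      rw [this, mul_zero] at h1
      exact_mod_cast h1
    have hAwz : A.mulVec (fun i => (wz i : ℚ)) = 0 := by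
      have : (fun i => (wz i : ℚ)) = ((b : ℤ) : ℚ) • wq := by
        funext i; rw [hwzspec i]; simp [smul_eq_mul]
      rw [this, Matrix.mulVec_smul, hAwq, smul_zero]
    -- split wz into two sparse integer vectors
    set z : Fin n → ℤ := fun i => if x i ≠ 0 then wz i else 0 with hz
    set zh : Fin n → ℤ := fun i => if x i ≠ 0 then 0 else -wz i with hzh
    have hsub : ∀ i, z i - zh i = wz i := by
      intro i
      by_cases h : x i = 0 <;> simp [hz, hzh, h]
    have hzcard : (Finset.univ.filter fun i => z i ≠ 0).card ≤ s := by
      refine le_trans (Finset.card_le_card ?_) hx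
      intro i hi
      simp only [Finset.mem_filter, Finset.mem_univ, true_and] at hi ⊢
      intro h
      apply hi
      simp [hz, h]
    have hzhcard : (Finset.univ.filter fun i => zh i ≠ 0).card ≤ s := by
      refine le_trans (Finset.card_le_card ?_) hxhat
      intro i hi
      simp only [Finset.mem_filter, Finset.mem_univ, true_and] at hi ⊢
      intro h
      apply hi
      show (if x i ≠ 0 then 0 else -wz i) = 0
      by_cases hxi : x i = 0
      · rw [if_neg (by simp [hxi]), neg_eq_zero]
        apply hwzS
        simp only [hS, Finset.mem_union, Finset.mem_filter, Finset.mem_univ, true_and,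
          not_or, not_not]
        exact ⟨hxi, h⟩
      · rw [if_pos hxi]
    have hAz : (A.map ((↑) : ℚ → ℝ)).mulVec (fun j => (z j : ℝ)) =
        (A.map ((↑) : ℚ → ℝ)).mulVec (fun j => (zh j : ℝ)) := by
      have hdiff : A.mulVec (fun i => ((z i : ℚ))) - A.mulVec (fun i => ((zh i : ℚ))) = 0 := by
        rw [← Matrix.mulVec_sub]
        have : ((fun i => ((z i : ℚ))) - fun i => ((zh i : ℚ))) = fun i => ((wz i : ℚ)) := by
          funext i
          simp only [Pi.sub_apply]
          rw [← hsub i]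
          push_cast
          ring
        rw [this, hAwz]
      have hq : A.mulVec (fun i => ((z i : ℚ))) = A.mulVec (fun i => ((zh i : ℚ))) := by
        have := sub_eq_zero.mp hdiff
        exact this
      funext i
      have h1 : (A.map ((↑) : ℚ → ℝ)).mulVec (fun j => (z j : ℝ)) i =
          ((A.mulVec (fun j => ((z j : ℚ))) i : ℚ) : ℝ) := by
        simp only [Matrix.mulVec, dotProduct, Matrix.map_apply]
        push_cast
        rfl
      have h2 : (A.map ((↑) : ℚ → ℝ)).mulVec (fun j => (zh j : ℝ)) i =
          ((A.mulVec (fun j => ((zh j : ℚ))) i : ℚ) : ℝ) := by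
        simp only [Matrix.mulVec, dotProduct, Matrix.map_apply]
        push_cast
        rfl
      rw [h1, h2, hq]
    have := hZ zh hzhcard z hzcard hAz
    -- z = zh forces wz = 0, contradiction
    apply hwz0
    funext i
    have := congrFun this i
    have h1 := hsub i
    rw [this] at h1
    simp only [sub_self] at h1
    simpa using h1.symm
  · -- easy direction: ℝ-good → ℤ-good
    intro hR xhat hxhat x hx hAx
    have h1 : (Finset.univ.filter fun i => ((xhat i : ℝ)) ≠ 0).card ≤ s := by
      refine le_trans (le_of_eq (congrArg Finset.card ?_)) hxhat
      apply Finset.filter_congr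
      intro i _
      simp
    have h2 : (Finset.univ.filter fun i => ((x i : ℝ)) ≠ 0).card ≤ s := by
      refine le_trans (le_of_eq (congrArg Finset.card ?_)) hx
      apply Finset.filter_congr
      intro i _
      simp
    have := hR (fun j => (xhat j : ℝ)) h1 (fun j => (x j : ℝ)) h2 hAx
    funext i
    have := congrFun this i
    exact_mod_cast this
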